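/- Let G be a directed graph on vertices {1,…,n} that has a globally reachable node (a node reachable from every other node by a directed path), and let d ≥ 1. For any configuration x ∈ (ℝ^d)^n, the directed bearing consensus field vanishes, i.e., ∑_{j ∈ N_i⁺} u_{ij}(x) = 0 for every i, if and only if all agents are coincident: x_1 = x_2 = ⋯ = x_n. -/

import Mathlib

open Finset

/-- The bearing from agent `i` to agent `j`: the unit vector pointing from `x i` to `x j`,
or `0` when the agents coincide. -/
noncomputable def bearing {d n : ℕ} (x : Fin n → EuclideanSpace ℝ (Fin d)) (i j : Fin n) :
    EuclideanSpace ℝ (Fin d) :=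
  ‖x j - x i‖⁻¹ • (x j - x i)

/-- The directed bearing-only consensus vector field `F(x)_i = ∑_{j ∈ N_i⁺} u_{ij}(x)`,
where `A i j` means there is a directed edge from `i` to `j`. -/
noncomputable def dirConsField {d n : ℕ} (A : Fin n → Fin n → Prop) [DecidableRel A]
    (x : Fin n → EuclideanSpace ℝ (Fin d)) (i : Fin n) : EuclideanSpace ℝ (Fin d) :=
  ∑ j ∈ Finset.univ.filter (fun j => A i j), bearing x i j

theorem stmt_6 {d n : ℕ} (hd : 1 ≤ d)
    (A : Fin n → Fin n → Prop) [DecidableRel A]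
    (hloop : ∀ i, ¬ A i i)
    (hreach : ∃ r : Fin n, ∀ i : Fin n, Relation.ReflTransGen A i r)
    (x : Fin n → EuclideanSpace ℝ (Fin d)) :
    (∀ i, dirConsField A x i = 0) ↔ (∀ i j, x i = x j) := by
  classical
  constructor
  · intro hF
    obtain ⟨r, hr⟩ := hreach
    -- Step: at a global maximizer of j ↦ ⟪c, x j⟫, every out-neighbor is also a maximizer.
    have step : ∀ (c : EuclideanSpace ℝ (Fin d)) (a b : Fin n),
        (∀ j, (inner ℝ c (x j) : ℝ) ≤ (inner ℝ c (x a) : ℝ)) → A a b → (inner ℝ c (x b) : ℝ) = (inner ℝ c (x a) : ℝ) := by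
      intro c a b hmax hab
      have hsum : ∑ j ∈ Finset.univ.filter (fun j => A a j), (inner ℝ c (bearing x a j) : ℝ) = 0 := by
        rw [← inner_sum]
        simpa [dirConsField] using congrArg (fun v => (inner ℝ c (v) : ℝ)) (hF a)
      have hnonpos : ∀ j ∈ Finset.univ.filter (fun j => A a j), (inner ℝ c (bearing x a j) : ℝ) ≤ 0 := by
        intro j _
        rw [bearing, real_inner_smul_right]
        have h1 : (inner ℝ c (x j - x a) : ℝ) ≤ 0 := by
          rw [inner_sub_right]; linarith [hmax j]
        have h2 : (0:ℝ) ≤ ‖x j - x a‖⁻¹ := by positivity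
        exact mul_nonpos_of_nonneg_of_nonpos h2 h1
      have hz : (inner ℝ c (bearing x a b) : ℝ) = 0 := by
        have := (Finset.sum_eq_zero_iff_of_nonpos hnonpos).mp hsum
        exact this b (by simp [hab])
      by_cases hxe : x b = x a
      · rw [hxe]
      · have hne : x b - x a ≠ 0 := sub_ne_zero.mpr hxe
        have hnorm : ‖x b - x a‖⁻¹ ≠ 0 := inv_ne_zero (norm_ne_zero_iff.mpr hne)
        rw [bearing, real_inner_smul_right] at hz
        have : (inner ℝ c (x b - x a) : ℝ) = 0 := by
          rcases mul_eq_zero.mp hz with h | h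
          · exact absurd h hnorm
          · exact h
        rw [inner_sub_right] at this
        linarith
    -- For every direction c, ⟪c, x i⟫ ≤ ⟪c, x r⟫.
    have key : ∀ (c : EuclideanSpace ℝ (Fin d)) (i : Fin n), (inner ℝ c (x i) : ℝ) ≤ (inner ℝ c (x r) : ℝ) := by
      intro c i
      obtain ⟨i0, _, hi0⟩ := Finset.exists_max_image Finset.univ
        (fun j => (inner ℝ c (x j) : ℝ)) ⟨i, Finset.mem_univ i⟩
      have h0 : ∀ j, (inner ℝ c (x j) : ℝ) ≤ (inner ℝ c (x i0) : ℝ) := fun j => hi0 j (Finset.mem_univ j)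
      have hchain := hr i0
      clear hr
      have : ∀ j, (inner ℝ c (x j) : ℝ) ≤ (inner ℝ c (x r) : ℝ) := by
        induction hchain with
        | refl => exact h0
        | @tail b c' hab hbc ih =>
          intro j
          rw [step c b c' ih hbc] at *
          exact ih j
      exact this i
    intro i j
    have hri : ∀ k, x k = x r := by
      intro k
      have h1 := key (x k - x r) k
      have h2 : (inner ℝ (x k - x r) (x k - x r) : ℝ) ≤ 0 := by
        rw [inner_sub_right]; linarith
      have hz : x k - x r = 0 := by
        have hpos := real_inner_self_nonneg (x := x k - x r)
        have : (inner ℝ (x k - x r) (x k - x r) : ℝ) = 0 := le_antisymm h2 hpos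
        exact inner_self_eq_zero.mp this
      exact sub_eq_zero.mp hz
    rw [hri i, hri j]
  · intro hx i
    have : ∀ j ∈ Finset.univ.filter (fun j => A i j), bearing x i j = 0 := by
      intro j _
      simp [bearing, hx j i]
    simp [dirConsField, Finset.sum_eq_zero this]
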